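/- Let X be a finite-dimensional normed space, F ⊆ X nonempty closed convex with 0 ∈ F, and Q ⊆ X a nonempty compact set. Then T_Q^F(x) = 0 if and only if x ∈ Q − F_∞. -/

import Mathlib

open scoped ENNReal Pointwise

/-- The asymptotic cone of `F` at base point `x`. -/
def asympCone {X : Type*} [NormedAddCommGroup X] [NormedSpace ℝ X]
    (F : Set X) (x : X) : Set X :=
  {d | ∀ t : ℝ, 0 < t → x + t • d ∈ F}

/-- The minimal time function `T_Q^F`. -/
noncomputable def minTime {X : Type*} [NormedAddCommGroup X] [NormedSpace ℝ X]
    (F Q : Set X) (x : X) : ℝ≥0∞ :=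
  sInf (ENNReal.ofReal '' {t : ℝ | 0 ≤ t ∧ ∃ f ∈ F, x + t • f ∈ Q})

theorem minTime_eq_zero_iff {X : Type*} [NormedAddCommGroup X] [NormedSpace ℝ X]
    [FiniteDimensional ℝ X]
    (F : Set X) (hFne : F.Nonempty) (hFcl : IsClosed F) (hFconv : Convex ℝ F)
    (h0F : (0 : X) ∈ F) (Q : Set X) (hQne : Q.Nonempty) (hQcpt : IsCompact Q)
    (x : X) :
    minTime F Q x = 0 ↔ x ∈ Q - asympCone F 0 := by
  constructor
  · intro h
    have hne : ∀ n : ℕ, ∃ t : ℝ, (0 ≤ t ∧ ∃ f ∈ F, x + t • f ∈ Q) ∧ t < 1 / (n + 1) := by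
      intro n
      have hpos : (0 : ℝ≥0∞) < ENNReal.ofReal (1 / (n + 1)) :=
        ENNReal.ofReal_pos.2 (by positivity)
      have hlt : sInf (ENNReal.ofReal '' {t : ℝ | 0 ≤ t ∧ ∃ f ∈ F, x + t • f ∈ Q}) <
          ENNReal.ofReal (1 / (n + 1)) := by
        rw [show sInf (ENNReal.ofReal '' {t : ℝ | 0 ≤ t ∧ ∃ f ∈ F, x + t • f ∈ Q}) = 0 from h]
        exact hpos
      rw [sInf_lt_iff] at hlt
      obtain ⟨a, ⟨t, ht, rfl⟩, hlt⟩ := hlt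
      exact ⟨t, ht, (ENNReal.ofReal_lt_ofReal_iff (by positivity)).1 hlt⟩
    choose t htt hlt using hne
    have ht0 : ∀ n, 0 ≤ t n := fun n => (htt n).1
    choose f hfF hfQ using fun n => (htt n).2
    have htlim : Filter.Tendsto t Filter.atTop (nhds 0) := by
      apply squeeze_zero ht0 (fun n => le_of_lt (hlt n))
      exact tendsto_one_div_add_atTop_nhds_zero_nat
    obtain ⟨q, hqQ, φ, hφ, hconv⟩ := hQcpt.tendsto_subseq hfQ
    have hdlim : Filter.Tendsto (fun n => t (φ n) • f (φ n)) Filter.atTop (nhds (q - x)) := by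
      have := hconv.sub_const x
      simpa using this
    refine Set.mem_sub.2 ⟨q, hqQ, q - x, ?_, by abel⟩
    intro s hs
    rw [zero_add]
    have hmem : ∀ᶠ n in Filter.atTop, (s * t (φ n)) • f (φ n) ∈ F := by
      have htphi : Filter.Tendsto (fun n => t (φ n)) Filter.atTop (nhds 0) :=
        htlim.comp hφ.tendsto_atTop
      have : ∀ᶠ n in Filter.atTop, t (φ n) < 1 / s := by
        have h1s : (0 : ℝ) < 1 / s := by positivity
        exact htphi.eventually (eventually_lt_nhds h1s)
      filter_upwards [this] with n hn
      refine hFconv.smul_mem_of_zero_mem h0F (hfF (φ n)) ⟨mul_nonneg hs.le (ht0 _), ?_⟩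
      have h1 : t (φ n) * s < 1 := (lt_div_iff₀ hs).1 hn
      nlinarith [h1]
    have hslim : Filter.Tendsto (fun n => (s * t (φ n)) • f (φ n)) Filter.atTop
        (nhds (s • (q - x))) := by
      have h2 := hdlim.const_smul s
      simpa [smul_smul] using h2
    exact hFcl.mem_of_tendsto hslim hmem
  · intro h
    obtain ⟨q, hqQ, d, hd, hqd⟩ := Set.mem_sub.1 h
    refine le_antisymm ?_ zero_le
    have key : ∀ n : ℕ, minTime F Q x ≤ ENNReal.ofReal (1 / (n + 1)) := by
      intro n
      apply sInf_le
      refine ⟨1 / (n + 1), ⟨by positivity, (n + 1 : ℝ) • d, ?_, ?_⟩, rfl⟩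
      · have := hd (n + 1 : ℝ) (by positivity)
        simpa using this
      · have hne : (1 : ℝ) / (n + 1) ≠ 0 := by positivity
        rw [smul_smul]
        rw [show (1 : ℝ) / (n + 1) * (n + 1) = 1 by field_simp]
        rw [one_smul, ← hqd]
        simpa using hqQ
    have hlim : Filter.Tendsto (fun n : ℕ => ENNReal.ofReal (1 / (n + 1)))
        Filter.atTop (nhds 0) := by
      rw [show (0 : ℝ≥0∞) = ENNReal.ofReal 0 by simp]
      exact ENNReal.tendsto_ofReal tendsto_one_div_add_atTop_nhds_zero_nat
    exact ge_of_tendsto' hlim key
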